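/- Assume the IFS is a fractal of unity and the fixed points p_1,…,p_n are not all equal. Then every extremal point of the attractor F is eventually focal: for every e ∈ Ext(F) there exist a finite word b and a nonempty focal word x over {1,…,n} such that e = T_b(p_x). -/

import Mathlib

open Complex

noncomputable section

/-- Composition of IFS maps along a finite word: `T_a = T_{a₁} ∘ ⋯ ∘ T_{a_L}`. -/
def wordMap {n : ℕ} (T : Fin n → ℂ → ℂ) : List (Fin n) → ℂ → ℂ
  | [] => id
  | k :: a => T k ∘ wordMap T a

/-- Product of factors along a finite word: `φ_a = φ_{a₁} ⋯ φ_{a_L}`. -/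
def wordFactor {n : ℕ} (φ : Fin n → ℂ) (a : List (Fin n)) : ℂ :=
  (a.map φ).prod

/-- `e` is an extremal point of `S`: it belongs to `S` and does not lie in the open
segment between any two distinct points of `S`. -/
def IsExtremal (S : Set ℂ) (e : ℂ) : Prop :=
  e ∈ S ∧ ¬ ∃ s₁ s₂ : ℂ, s₁ ∈ S ∧ s₂ ∈ S ∧ s₁ ≠ s₂ ∧
    ∃ t : ℝ, 0 < t ∧ t < 1 ∧ e = t • s₁ + (1 - t) • s₂

section Aux

variable {n : ℕ} {T : Fin n → ℂ → ℂ} {p φ : Fin n → ℂ}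

lemma wordMap_append (T : Fin n → ℂ → ℂ) (a b : List (Fin n)) (z : ℂ) :
    wordMap T (a ++ b) z = wordMap T a (wordMap T b z) := by
  induction a with
  | nil => rfl
  | cons k a ih =>
    show T k (wordMap T (a ++ b) z) = _
    rw [ih]; rfl

lemma wordFactor_cons (φ : Fin n → ℂ) (k : Fin n) (a : List (Fin n)) :
    wordFactor φ (k :: a) = φ k * wordFactor φ a := by
  simp [wordFactor]

lemma wordMap_sub (hT : ∀ k z, T k z = p k + φ k * (z - p k))
    (a : List (Fin n)) (z w : ℂ) :
    wordMap T a z - wordMap T a w = wordFactor φ a * (z - w) := by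
  induction a with
  | nil => simp [wordMap, wordFactor]
  | cons k a ih =>
    show T k (wordMap T a z) - T k (wordMap T a w) = _
    rw [hT, hT, wordFactor_cons]
    linear_combination φ k * ih

lemma abs_wordFactor_pos (hφ : ∀ k, 0 < ‖φ k‖) (a : List (Fin n)) :
    0 < ‖wordFactor φ a‖ := by
  induction a with
  | nil => simp [wordFactor]
  | cons k a ih => rw [wordFactor_cons, norm_mul]; exact mul_pos (hφ k) ih

lemma prodAbs_pos_le_one (hφ : ∀ k, 0 < ‖φ k‖ ∧ ‖φ k‖ < 1)
    (a : List (Fin n)) :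
    0 < (a.map fun k => ‖φ k‖).prod ∧
      (a.map fun k => ‖φ k‖).prod ≤ 1 := by
  induction a with
  | nil => simp
  | cons k a ih =>
    rw [List.map_cons, List.prod_cons]
    constructor
    · exact mul_pos (hφ k).1 ih.1
    · nlinarith [(hφ k).1, (hφ k).2, ih.1, ih.2]

lemma prodAbs_lt_one (hφ : ∀ k, 0 < ‖φ k‖ ∧ ‖φ k‖ < 1)
    (a : List (Fin n)) (ha : a ≠ []) :
    (a.map fun k => ‖φ k‖).prod < 1 := by
  cases a with
  | nil => exact absurd rfl ha
  | cons k a =>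
    rw [List.map_cons, List.prod_cons]
    nlinarith [(hφ k).1, (hφ k).2, (prodAbs_pos_le_one hφ a).1, (prodAbs_pos_le_one hφ a).2]

lemma factor_polar (θ : Fin n → ℝ)
    (hu : ∀ k, φ k = (‖φ k‖ : ℂ) * Complex.exp ((θ k : ℂ) * Complex.I))
    (a : List (Fin n)) :
    wordFactor φ a = (((a.map fun k => ‖φ k‖).prod : ℝ) : ℂ) *
      Complex.exp ((((a.map θ).sum : ℝ) : ℂ) * Complex.I) := by
  induction a with
  | nil => simp [wordFactor]
  | cons k a ih =>
    rw [wordFactor_cons, ih, hu k, List.map_cons, List.prod_cons, List.map_cons, List.sum_cons]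
    push_cast
    rw [add_mul, Complex.exp_add]
    ring

end Aux

/-- in a fractal of unity (all rotation angles rational multiples of `2π`)
with not all fixed points equal, every extremal point of `F` is eventually focal:
`e = T_b(p_x)` for some finite word `b` and nonempty focal word `x`. -/
theorem extremal_eventually_focal {n : ℕ} (hn : 1 ≤ n) (p φ : Fin n → ℂ)
    (hφ : ∀ k, 0 < ‖φ k‖ ∧ ‖φ k‖ < 1)
    (T : Fin n → ℂ → ℂ) (hT : ∀ k z, T k z = p k + φ k * (z - p k))
    (F : Set ℂ) (hFne : F.Nonempty) (hFc : IsCompact F)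
    (hFinv : F = ⋃ k, T k '' F)
    (hne : ∃ i j, p i ≠ p j)
    (M : ℕ) (hM : 1 ≤ M) (N : Fin n → ℕ) (hN : ∀ k, N k < M)
    (hunity : ∀ k, φ k = (‖φ k‖ : ℂ) *
      Complex.exp ((((2 * Real.pi * (N k : ℝ)) / (M : ℝ) : ℝ) : ℂ) * Complex.I))
    (pp : List (Fin n) → ℂ) (hpp : ∀ x, x ≠ [] → wordMap T x (pp x) = pp x) :
    ∀ e, IsExtremal F e → ∃ (b x : List (Fin n)), x ≠ [] ∧
      (∃ r : ℝ, 0 < r ∧ wordFactor φ x = (r : ℂ)) ∧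
      e = wordMap T b (pp x) := by
  intro e he
  have hφpos : ∀ k, 0 < ‖φ k‖ := fun k => (hφ k).1
  have hφne : ∀ k, φ k ≠ 0 := by
    intro k h
    have := hφpos k
    rw [h] at this; simp at this
  -- invariance
  have hTF : ∀ k, ∀ z ∈ F, T k z ∈ F := by
    intro k z hz
    rw [hFinv]
    exact Set.mem_iUnion.2 ⟨k, ⟨z, hz, rfl⟩⟩
  have hwF : ∀ (a : List (Fin n)) (z : ℂ), z ∈ F → wordMap T a z ∈ F := by
    intro a
    induction a with
    | nil => intro z hz; exact hz
    | cons k a ih => intro z hz; exact hTF k _ (ih z hz)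
  -- descent step
  have hstep : ∀ u : ℂ, IsExtremal F u → ∃ (k : Fin n) (v : ℂ),
      IsExtremal F v ∧ u = T k v := by
    intro u hu
    have huF := hu.1
    rw [hFinv] at huF
    obtain ⟨S, ⟨k, rfl⟩, hus⟩ := huF
    obtain ⟨v, hvF, rfl⟩ := hus
    refine ⟨k, v, ⟨hvF, ?_⟩, rfl⟩
    rintro ⟨s₁, s₂, hs₁, hs₂, h12, t, ht0, ht1, rfl⟩
    refine hu.2 ⟨T k s₁, T k s₂, hTF k _ hs₁, hTF k _ hs₂, ?_, t, ht0, ht1, ?_⟩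
    · intro h
      apply h12
      have h' : φ k * (s₁ - s₂) = 0 := by
        rw [hT k s₁, hT k s₂] at h
        linear_combination h
      rcases mul_eq_zero.mp h' with h'' | h''
      · exact absurd h'' (hφne k)
      · exact sub_eq_zero.mp h''
    · rw [hT, hT, hT]
      simp only [Complex.real_smul]
      push_cast
      ring
  -- build the infinite address
  choose dig nxt hext heq using hstep
  have hseq : ∃ (a : ℕ → Fin n) (z : ℕ → ℂ), z 0 = e ∧
      ∀ m, IsExtremal F (z m) ∧ z m = T (a m) (z (m + 1)) := by
    let zs : ℕ → {w : ℂ // IsExtremal F w} := fun m =>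
      Nat.rec ⟨e, he⟩ (fun _ u => ⟨nxt u.1 u.2, hext u.1 u.2⟩) m
    refine ⟨fun m => dig (zs m).1 (zs m).2, fun m => (zs m).1, rfl, fun m => ⟨(zs m).2, ?_⟩⟩
    exact heq (zs m).1 (zs m).2
  obtain ⟨a, z, hz0, hzm⟩ := hseq
  -- e = wordMap along prefixes
  have hA : ∀ j, e = wordMap T ((List.range j).map a) (z j) := by
    intro j
    induction j with
    | zero => simpa [wordMap] using hz0.symm
    | succ j ih =>
      rw [List.range_succ, List.map_append, wordMap_append]
      have : wordMap T (List.map a [j]) (z (j + 1)) = z j := ((hzm j).2).symm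
      rw [this]; exact ih
  -- pigeonhole on rotation residues
  haveI : NeZero M := ⟨by omega⟩
  set R : ℕ → ZMod M := fun j => ((((List.range j).map a).map N).sum : ZMod M) with hR
  have hpig : ∃ j j', j < j' ∧ R j = R j' := by
    have hcard : (Finset.univ : Finset (ZMod M)).card < (Finset.range (M + 1)).card := by
      rw [Finset.card_univ, ZMod.card, Finset.card_range]; omega
    obtain ⟨j, _, j', _, hjj', hRe⟩ :=
      Finset.exists_ne_map_eq_of_card_lt_of_maps_to hcard
        (fun i _ => Finset.mem_univ (R i))
    rcases hjj'.lt_or_gt with h | h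
    · exact ⟨j, j', h, hRe⟩
    · exact ⟨j', j, h, hRe.symm⟩
  obtain ⟨j, j', hjlt, hRe⟩ := hpig
  set d := j' - j with hd
  set x : List (Fin n) := (List.range d).map (fun i => a (j + i)) with hx
  have hdpos : 0 < d := by omega
  have hxne : x ≠ [] := by
    rw [hx]
    simp only [ne_eq, List.map_eq_nil_iff, List.range_eq_nil]
    omega
  -- decomposition of the word
  have hsplit : (List.range j').map a = (List.range j).map a ++ x := by
    have : j' = j + d := by omega
    rw [this, List.range_add, List.map_append, List.map_map]
    rfl
  -- divisibility
  have hdvd : M ∣ (x.map N).sum := by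
    have : R j' = R j + (((x.map N).sum : ℕ) : ZMod M) := by
      rw [hR]
      simp only [hsplit, List.map_append, List.sum_append, Nat.cast_add]
    have h0 : (((x.map N).sum : ℕ) : ZMod M) = 0 := by
      have h := hRe
      rw [this] at h
      exact left_eq_add.mp h
    exact (ZMod.natCast_eq_zero_iff _ _).mp h0
  obtain ⟨q, hq⟩ := hdvd
  -- the factor of x is a positive real
  set ρ : ℝ := (x.map fun k => ‖φ k‖).prod with hρ
  have hρpos : 0 < ρ := (prodAbs_pos_le_one hφ x).1
  have hρlt : ρ < 1 := prodAbs_lt_one hφ x hxne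
  have hθsum : ∀ l : List (Fin n),
      ((l.map fun k => (2 * Real.pi * (N k : ℝ)) / (M : ℝ)).sum : ℝ)
        = 2 * Real.pi * ((l.map N).sum : ℕ) / M := by
    intro l
    induction l with
    | nil => simp
    | cons k l ih =>
      rw [List.map_cons, List.sum_cons, ih, List.map_cons, List.sum_cons]
      push_cast
      ring
  have hMne : (M : ℝ) ≠ 0 := by positivity
  have hfx : wordFactor φ x = (ρ : ℂ) := by
    rw [factor_polar (fun k => (2 * Real.pi * (N k : ℝ)) / (M : ℝ)) hunity x, hθsum, hq]
    have hval : (2 * Real.pi * ((M * q : ℕ) : ℝ) / M : ℝ) = 2 * Real.pi * q := by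
      push_cast
      field_simp
    rw [hval]
    have hexp : Complex.exp (((2 * Real.pi * q : ℝ) : ℂ) * Complex.I) = 1 := by
      have harg : (((2 * Real.pi * q : ℝ) : ℂ) * Complex.I)
          = (q : ℕ) * (2 * (Real.pi : ℂ) * Complex.I) := by
        push_cast
        ring
      rw [harg, Complex.exp_nat_mul, Complex.exp_two_pi_mul_I, one_pow]
    rw [hexp, mul_one]
  -- the fixed point of x lies in F
  have hpxF : pp x ∈ F := by
    obtain ⟨z0, hz0F⟩ := hFne
    have hmem : ∀ m, (wordMap T x)^[m] z0 ∈ F := by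
      intro m
      induction m with
      | zero => exact hz0F
      | succ m ih => rw [Function.iterate_succ_apply']; exact hwF x _ ih
    have hdiff : ∀ m, (wordMap T x)^[m] z0 - pp x = (wordFactor φ x) ^ m * (z0 - pp x) := by
      intro m
      induction m with
      | zero => simp
      | succ m ih =>
        rw [Function.iterate_succ_apply']
        calc wordMap T x ((wordMap T x)^[m] z0) - pp x
            = wordMap T x ((wordMap T x)^[m] z0) - wordMap T x (pp x) := by
              rw [hpp x hxne]
          _ = wordFactor φ x * ((wordMap T x)^[m] z0 - pp x) := wordMap_sub hT x _ _
          _ = wordFactor φ x ^ (m + 1) * (z0 - pp x) := by rw [ih]; ring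
    have htend : Filter.Tendsto (fun m => (wordMap T x)^[m] z0) Filter.atTop (nhds (pp x)) := by
      rw [tendsto_iff_dist_tendsto_zero]
      have hfun : (fun m => dist ((wordMap T x)^[m] z0) (pp x))
          = fun m => ρ ^ m * ‖z0 - pp x‖ := by
        funext m
        rw [Complex.dist_eq, hdiff m, norm_mul, norm_pow, hfx]
        simp [abs_of_pos hρpos]
      rw [hfun]
      simpa using
        (tendsto_pow_atTop_nhds_zero_of_lt_one (le_of_lt hρpos) hρlt).mul_const
          (‖z0 - pp x‖)
    exact hFc.isClosed.mem_of_tendsto htend (Filter.Eventually.of_forall hmem)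
  -- z j = wordMap T x (z j')
  have hinj : ∀ u v : ℂ, wordMap T ((List.range j).map a) u
      = wordMap T ((List.range j).map a) v → u = v := by
    intro u v huv
    have h1 : wordFactor φ ((List.range j).map a) * (u - v) = 0 := by
      rw [← wordMap_sub hT, huv, sub_self]
    have h2 : wordFactor φ ((List.range j).map a) ≠ 0 := by
      intro h
      have := abs_wordFactor_pos hφpos ((List.range j).map a)
      rw [h] at this; simp at this
    have := (mul_eq_zero.mp h1).resolve_left h2
    exact sub_eq_zero.mp this
  have hzj : z j = wordMap T x (z j') := by
    apply hinj
    rw [← hA j, ← wordMap_append, ← hsplit, ← hA j']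
  -- extremality forces z j' = pp x
  have hdiffj : z j - pp x = (ρ : ℂ) * (z j' - pp x) := by
    calc z j - pp x = wordMap T x (z j') - wordMap T x (pp x) := by
          rw [← hzj, hpp x hxne]
      _ = wordFactor φ x * (z j' - pp x) := wordMap_sub hT x _ _
      _ = (ρ : ℂ) * (z j' - pp x) := by rw [hfx]
  have hzjpp : z j = pp x := by
    by_cases hcase : z j' = pp x
    · rw [hcase, sub_self, mul_zero, sub_eq_zero] at hdiffj
      exact hdiffj
    · exfalso
      refine (hzm j).1.2 ⟨z j', pp x, (hzm j').1.1, hpxF, hcase, ρ, hρpos, hρlt, ?_⟩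
      simp only [Complex.real_smul]
      push_cast
      linear_combination hdiffj
  exact ⟨(List.range j).map a, x, hxne, ⟨ρ, hρpos, hfx⟩, by rw [← hzjpp]; exact hA j⟩
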